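/- Let G be a finite simple graph, let S be a local maximum stable set of G, let H be the subgraph of G induced by N[S], and suppose H is a König–Egerváry graph. If M is a maximum matching of H, then there exists a maximum matching M₀ of G with M ⊆ M₀. -/

import Mathlib

open Finset
open scoped Classical

/-- `S` is a stable (independent) set of `G`. -/
def IsStableSet {V : Type*} (G : SimpleGraph V) (S : Finset V) : Prop :=
  ∀ u ∈ S, ∀ v ∈ S, ¬ G.Adj u v

/-- `S` is a maximum stable set of `G`. -/
def IsMaxStableSet {V : Type*} [Fintype V] (G : SimpleGraph V) (S : Finset V) : Prop :=
  IsStableSet G S ∧ ∀ T : Finset V, IsStableSet G T → T.card ≤ S.card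

/-- The closed neighborhood `N[S]` of a set `S` of vertices of `G`. -/
noncomputable def closedNbhd {V : Type*} [Fintype V] (G : SimpleGraph V) (S : Finset V) :
    Finset V :=
  S ∪ Finset.univ.filter (fun v => ∃ u ∈ S, G.Adj u v)

/-- `S` is a local maximum stable set of `G`: it is a maximum stable set of the subgraph
of `G` induced by `N[S]`, i.e. it is stable and no stable set contained in `N[S]` is larger. -/
def IsLocalMaxStableSet {V : Type*} [Fintype V] (G : SimpleGraph V) (S : Finset V) : Prop :=
  IsStableSet G S ∧
    ∀ T : Finset V, IsStableSet G T → T ⊆ closedNbhd G S → T.card ≤ S.card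

/-- `M` is a matching of `G`: a set of pairwise disjoint edges of `G`. -/
def IsMatching {V : Type*} (G : SimpleGraph V) (M : Finset (Sym2 V)) : Prop :=
  (∀ e ∈ M, e ∈ G.edgeSet) ∧
    ∀ e ∈ M, ∀ f ∈ M, e ≠ f → ∀ v : V, v ∈ e → v ∉ f

/-- `M` is a maximum matching of `G`. -/
def IsMaxMatching {V : Type*} [Fintype V] (G : SimpleGraph V) (M : Finset (Sym2 V)) : Prop :=
  IsMatching G M ∧ ∀ N : Finset (Sym2 V), IsMatching G N → N.card ≤ M.card

/-- `M` is a matching of the subgraph of `G` induced by the vertex set `A`, i.e. a matching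
of `G` all of whose edges have both endpoints in `A`. -/
def IsMatchingOn {V : Type*} (G : SimpleGraph V) (A : Finset V) (M : Finset (Sym2 V)) : Prop :=
  IsMatching G M ∧ ∀ e ∈ M, ∀ v : V, v ∈ e → v ∈ A

/-- `M` is a maximum matching of the subgraph of `G` induced by `A`. -/
def IsMaxMatchingOn {V : Type*} [Fintype V] (G : SimpleGraph V) (A : Finset V)
    (M : Finset (Sym2 V)) : Prop :=
  IsMatchingOn G A M ∧ ∀ N : Finset (Sym2 V), IsMatchingOn G A N → N.card ≤ M.card

/-- The stability number `α` of the subgraph of `G` induced by `A`. -/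
noncomputable def stabNumOn {V : Type*} [Fintype V] (G : SimpleGraph V) (A : Finset V) : ℕ :=
  sSup {n | ∃ S : Finset V, S ⊆ A ∧ IsStableSet G S ∧ S.card = n}

/-- The matching number `μ` of the subgraph of `G` induced by `A`. -/
noncomputable def matchNumOn {V : Type*} [Fintype V] (G : SimpleGraph V) (A : Finset V) : ℕ :=
  sSup {n | ∃ M : Finset (Sym2 V), IsMatchingOn G A M ∧ M.card = n}

/-- The stability number `α(G)`. -/
noncomputable def stabNum {V : Type*} [Fintype V] (G : SimpleGraph V) : ℕ :=
  stabNumOn G Finset.univ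

/-- The matching number `μ(G)`. -/
noncomputable def matchNum {V : Type*} [Fintype V] (G : SimpleGraph V) : ℕ :=
  matchNumOn G Finset.univ

/-- `G` is a König–Egerváry graph: `α(G) + μ(G) = |V(G)|`. -/
def IsKonigEgervary {V : Type*} [Fintype V] (G : SimpleGraph V) : Prop :=
  stabNum G + matchNum G = Fintype.card V

/-- The subgraph of `G` induced by `A` is a König–Egerváry graph:
`α(G[A]) + μ(G[A]) = |A|`. -/
def IsKonigEgervaryOn {V : Type*} [Fintype V] (G : SimpleGraph V) (A : Finset V) : Prop :=
  stabNumOn G A + matchNumOn G A = A.card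

/-- if `S` is a local maximum stable set of `G`, the subgraph `H` of `G`
induced by `N[S]` is a König–Egerváry graph, and `M` is a maximum matching of `H`, then `M`
extends to a maximum matching of `G`. -/
theorem maxMatching_extends_to_maxMatching {V : Type*} [Fintype V]
    (G : SimpleGraph V) (S : Finset V)
    (hS : IsLocalMaxStableSet G S)
    (hKE : IsKonigEgervaryOn G (closedNbhd G S))
    (M : Finset (Sym2 V)) (hM : IsMaxMatchingOn G (closedNbhd G S) M) :
    ∃ M₀ : Finset (Sym2 V), IsMaxMatching G M₀ ∧ M ⊆ M₀ := by
  classical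
  set A := closedNbhd G S with hA
  set B := A \ S with hB
  have hvert : ∀ e : Sym2 V, ∃ u, u ∈ e := by
    intro e
    induction e using Sym2.ind with
    | _ x y => exact ⟨x, Sym2.mem_mk_left x y⟩
  have hSA : S ⊆ A := by
    intro v hv
    simp [hA, closedNbhd, Finset.mem_union, hv]
  -- every edge of G meeting A meets B = A \ S
  have hmeet : ∀ e ∈ G.edgeSet, (∃ v ∈ e, v ∈ A) → ∃ v ∈ e, v ∈ B := by
    intro e he hv
    induction e using Sym2.ind with
    | _ u v =>
      rw [SimpleGraph.mem_edgeSet] at he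
      have key : ∀ x y : V, G.Adj x y → x ∈ S → (y ∈ A ∧ y ∉ S) := by
        intro x y hxy hxS
        constructor
        · simp only [hA, closedNbhd, Finset.mem_union, Finset.mem_filter, Finset.mem_univ,
            true_and]
          exact Or.inr ⟨x, hxS, hxy⟩
        · intro hyS
          exact hS.1 x hxS y hyS hxy
      obtain ⟨w, hwmem, hwA⟩ := hv
      rw [Sym2.mem_iff] at hwmem
      rcases hwmem with rfl | rfl
      · by_cases hwS : w ∈ S
        · obtain ⟨hvA, hvS⟩ := key w v he hwS
          exact ⟨v, Sym2.mem_mk_right w v, Finset.mem_sdiff.mpr ⟨hvA, hvS⟩⟩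
        · exact ⟨w, Sym2.mem_mk_left w v, Finset.mem_sdiff.mpr ⟨hwA, hwS⟩⟩
      · by_cases hwS : w ∈ S
        · obtain ⟨huA, huS⟩ := key w u he.symm hwS
          exact ⟨u, Sym2.mem_mk_left u w, Finset.mem_sdiff.mpr ⟨huA, huS⟩⟩
        · exact ⟨w, Sym2.mem_mk_right u w, Finset.mem_sdiff.mpr ⟨hwA, hwS⟩⟩
  -- α(G[A]) = |S|
  have hub : ∀ n ∈ {n | ∃ T : Finset V, T ⊆ A ∧ IsStableSet G T ∧ T.card = n},
      n ≤ S.card := by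
    rintro n ⟨T, hTA, hTs, rfl⟩
    exact hS.2 T hTs hTA
  have hmemS : S.card ∈ {n | ∃ T : Finset V, T ⊆ A ∧ IsStableSet G T ∧ T.card = n} :=
    ⟨S, hSA, hS.1, rfl⟩
  have hstab : stabNumOn G A = S.card :=
    le_antisymm (csSup_le ⟨_, hmemS⟩ hub) (le_csSup ⟨S.card, hub⟩ hmemS)
  -- μ(G[A]) = |M|
  have hubM : ∀ n ∈ {n | ∃ N : Finset (Sym2 V), IsMatchingOn G A N ∧ N.card = n},
      n ≤ M.card := by
    rintro n ⟨N, hN, rfl⟩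
    exact hM.2 N hN
  have hmemM : M.card ∈ {n | ∃ N : Finset (Sym2 V), IsMatchingOn G A N ∧ N.card = n} :=
    ⟨M, hM.1, rfl⟩
  have hmatch : matchNumOn G A = M.card :=
    le_antisymm (csSup_le ⟨_, hmemM⟩ hubM) (le_csSup ⟨M.card, hubM⟩ hmemM)
  -- |M| = |B|
  have hBcard : B.card = A.card - S.card := Finset.card_sdiff_of_subset hSA
  have hcardSA : S.card ≤ A.card := Finset.card_le_card hSA
  have hMB : M.card = B.card := by
    have hke := hKE
    unfold IsKonigEgervaryOn at hke
    rw [hstab, hmatch] at hke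
    omega
  -- a maximum matching W of G
  have hbddU : BddAbove {n | ∃ N : Finset (Sym2 V),
      IsMatchingOn G (Finset.univ : Finset V) N ∧ N.card = n} := by
    refine ⟨Fintype.card (Sym2 V), ?_⟩
    rintro n ⟨N, _, rfl⟩
    exact Finset.card_le_univ N
  have hneU : ({n | ∃ N : Finset (Sym2 V),
      IsMatchingOn G (Finset.univ : Finset V) N ∧ N.card = n} : Set ℕ).Nonempty :=
    ⟨0, ∅, ⟨⟨by simp, by simp⟩, by simp⟩, rfl⟩
  have hWex : matchNum G ∈ {n | ∃ N : Finset (Sym2 V),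
      IsMatchingOn G (Finset.univ : Finset V) N ∧ N.card = n} := by
    unfold matchNum matchNumOn
    exact Nat.sSup_mem hneU hbddU
  obtain ⟨W, hW, hWcard⟩ := hWex
  set Wt := W.filter (fun e => ∃ v ∈ e, v ∈ A) with hWt
  set W' := W.filter (fun e => ¬ ∃ v ∈ e, v ∈ A) with hW'
  have hsplit : Wt.card + W'.card = W.card :=
    Finset.card_filter_add_card_filter_not _
  -- |Wt| ≤ |B|
  have hWtB : Wt.card ≤ B.card := by
    rcases Wt.eq_empty_or_nonempty with h | h
    · simp [h]
    · obtain ⟨e0, he0⟩ := h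
      obtain ⟨v0, _⟩ := hvert e0
      haveI : Nonempty V := ⟨v0⟩
      have hch : ∀ e ∈ Wt, ∃ v, v ∈ e ∧ v ∈ B := by
        intro e he
        have heW := Finset.mem_filter.mp he
        have := hmeet e (hW.1.1 e heW.1) heW.2
        simpa using this
      set f : Sym2 V → V := fun e =>
        if h : ∃ v, v ∈ e ∧ v ∈ B then h.choose else Classical.arbitrary V with hf
      have hfmem : ∀ e ∈ Wt, f e ∈ e ∧ f e ∈ B := by
        intro e he
        have h := hch e he
        simp only [hf, dif_pos h]
        exact h.choose_spec
      apply Finset.card_le_card_of_injOn f (fun e he => (hfmem e he).2)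
      intro e he e' he' hfe
      by_contra hne
      exact hW.1.2 e (Finset.mem_filter.mp (by exact he)).1 e'
        (Finset.mem_filter.mp (by exact he')).1 hne (f e)
        (hfmem e (by exact he)).1 (hfe ▸ (hfmem e' (by exact he')).1)
  -- properties of M and W'
  have hMedge : ∀ e ∈ M, e ∈ G.edgeSet := hM.1.1.1
  have hMinA : ∀ e ∈ M, ∀ v ∈ e, v ∈ A := hM.1.2
  have hW'edge : ∀ e ∈ W', e ∈ G.edgeSet := by
    intro e he
    exact hW.1.1 e (Finset.mem_filter.mp he).1
  have hW'notA : ∀ e ∈ W', ∀ v ∈ e, v ∉ A := by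
    intro e he v hv hvA
    exact (Finset.mem_filter.mp he).2 ⟨v, hv, hvA⟩
  set M₀ := M ∪ W' with hM₀
  have hdisj : Disjoint M W' := by
    rw [Finset.disjoint_left]
    intro e heM heW'
    obtain ⟨u, hu⟩ := hvert e
    exact hW'notA e heW' u hu (hMinA e heM u hu)
  have hM₀card : M₀.card = M.card + W'.card := Finset.card_union_of_disjoint hdisj
  have hM₀match : IsMatching G M₀ := by
    constructor
    · intro e he
      rcases Finset.mem_union.mp he with h | h
      · exact hMedge e h
      · exact hW'edge e h
    · intro e he f hf hef v hve hvf
      rcases Finset.mem_union.mp he with h1 | h1 <;>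
        rcases Finset.mem_union.mp hf with h2 | h2
      · exact hM.1.1.2 e h1 f h2 hef v hve hvf
      · exact hW'notA f h2 v hvf (hMinA e h1 v hve)
      · exact hW'notA e h1 v hve (hMinA f h2 v hvf)
      · exact hW.1.2 e (Finset.mem_filter.mp h1).1 f (Finset.mem_filter.mp h2).1 hef v hve hvf
  have hWle : W.card ≤ M₀.card := by
    have : Wt.card ≤ M.card := by rw [hMB]; exact hWtB
    omega
  refine ⟨M₀, ⟨hM₀match, ?_⟩, Finset.subset_union_left⟩
  intro N hN
  have hNmem : N.card ∈ {n | ∃ N' : Finset (Sym2 V),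
      IsMatchingOn G (Finset.univ : Finset V) N' ∧ N'.card = n} :=
    ⟨N, ⟨hN, fun e _ v _ => Finset.mem_univ v⟩, rfl⟩
  have hNle : N.card ≤ matchNum G := by
    unfold matchNum matchNumOn
    exact le_csSup hbddU hNmem
  omega
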